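/- Let A be a commutative ring and Z ⊊ A a prime ideal of A. Suppose A, B, C₁, C₂ are matrices over A such that the block matrix [[A, C₁],[B, C₂]] is square with determinant in A∖Z, where A is a square matrix and A and B have the same number of columns. Then there exists a matrix R over A, with entries in {0,1}, such that det(A + RB) ∈ A∖Z. -/

import Mathlib

open Matrix

lemma key_lemma {K : Type*} [Field K] :
    ∀ (b : ℕ) {a : ℕ} (A : Matrix (Fin a) (Fin a) K) (B : Matrix (Fin b) (Fin a) K),
      Submodule.span K (Set.range A ∪ Set.range B) = ⊤ →
      ∃ R : Matrix (Fin a) (Fin b) K,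
        (∀ i j, R i j = 0 ∨ R i j = 1) ∧ (A + R * B).det ≠ 0 := by
  intro b
  induction b with
  | zero =>
    intro a A B hspan
    refine ⟨0, fun i j => Or.inl rfl, ?_⟩
    rw [Matrix.zero_mul, add_zero]
    rw [Set.range_eq_empty B, Set.union_empty] at hspan
    have hr : LinearMap.range A.vecMulLinear = ⊤ := by
      rw [range_vecMulLinear]; exact hspan
    have hsurj : Function.Surjective A.vecMul := by
      have := LinearMap.range_eq_top.mp hr
      intro v; obtain ⟨x, hx⟩ := this v; exact ⟨x, hx⟩
    have hU : IsUnit A := Matrix.vecMul_surjective_iff_isUnit.mp hsurj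
    exact ((Matrix.isUnit_iff_isUnit_det A).mp hU).ne_zero
  | succ b ih =>
    intro a A B hspan
    set B' : Matrix (Fin b) (Fin a) K := B.submatrix Fin.castSucc id with hB'def
    by_cases hc : Submodule.span K (Set.range A ∪ Set.range B') = ⊤
    · obtain ⟨R', hR', hdet⟩ := ih A B' hc
      refine ⟨Matrix.of fun i j => if h : j = Fin.last b then 0 else R' i (j.castPred h),
        fun i j => by
          rcases eq_or_ne j (Fin.last b) with h | h
          · left; simp [h]
          · simpa [h] using hR' i (j.castPred h), ?_⟩
      have hRB : (Matrix.of fun i j => if h : j = Fin.last b then (0:K) else R' i (j.castPred h)) * B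
          = R' * B' := by
        ext i k
        rw [Matrix.mul_apply, Matrix.mul_apply, Fin.sum_univ_castSucc]
        have hne : ∀ x : Fin b, x.castSucc ≠ Fin.last b := fun x => (Fin.castSucc_lt_last x).ne
        simp [hne, hB'def]
      rw [show (A + (Matrix.of fun i j => if h : j = Fin.last b then (0:K) else R' i (j.castPred h)) * B)
          = A + R' * B' by rw [hRB]]
      exact hdet
    · have hex : ∃ i, A i ∈ Submodule.span K ((A '' {i}ᶜ) ∪ Set.range B') := by
        by_contra hno
        push_neg at hno
        have hli : LinearIndependent K A := by
          refine linearIndependent_iff_notMem_span.mpr ?_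
          intro i hi
          refine hno i (Submodule.span_mono ?_ hi)
          rw [← Set.compl_eq_univ_diff]
          exact Set.subset_union_left
        have hcard : Fintype.card (Fin a) = Module.finrank K (Fin a → K) := by
          rw [Module.finrank_fin_fun, Fintype.card_fin]
        have hli2 : LinearIndependent K (fun i => (A i : Fin a → K)) := hli
        have htop : Submodule.span K (Set.range (fun i => (A i : Fin a → K))) = ⊤ :=
          hli2.span_eq_top_of_card_eq_finrank' hcard
        have htop2 : Submodule.span K (Set.range A) = ⊤ := htop
        have hle := Submodule.span_mono (R := K) (Set.subset_union_left (s := Set.range A)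
          (t := Set.range B'))
        rw [htop2] at hle
        exact hc (top_le_iff.mp hle)
      obtain ⟨i, hi⟩ := hex
      set A' : Matrix (Fin a) (Fin a) K := A.updateRow i (A i + B (Fin.last b)) with hA'def
      have hspan' : Submodule.span K (Set.range A' ∪ Set.range B') = ⊤ := by
        set T := Submodule.span K (Set.range A' ∪ Set.range B') with hT
        have hBT : ∀ j, B' j ∈ T :=
          fun j => Submodule.subset_span (Set.mem_union_right _ (Set.mem_range_self j))
        have hAj : ∀ j, j ≠ i → A j ∈ T := by
          intro j hj
          have : A' j = A j := Matrix.updateRow_ne hj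
          exact this ▸ Submodule.subset_span (Set.mem_union_left _ (Set.mem_range_self j))
        have hAi : A i ∈ T := by
          refine Submodule.span_le.mpr ?_ hi
          rintro x (⟨j, hj, rfl⟩ | ⟨j, rfl⟩)
          · exact hAj j hj
          · exact hBT j
        have hA'i : A' i ∈ T :=
          Submodule.subset_span (Set.mem_union_left _ (Set.mem_range_self i))
        have hBl : B (Fin.last b) ∈ T := by
          have h1 : A' i = A i + B (Fin.last b) := Matrix.updateRow_self
          have := Submodule.sub_mem T hA'i hAi
          rwa [h1, add_sub_cancel_left] at this
        rw [eq_top_iff, ← hspan]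
        refine Submodule.span_le.mpr ?_
        rintro x (⟨j, rfl⟩ | ⟨j, rfl⟩)
        · by_cases hj : j = i
          · exact hj ▸ hAi
          · exact hAj j hj
        · refine Fin.lastCases ?_ ?_ j
          · exact hBl
          · intro j'; exact hBT j'
      obtain ⟨R', hR', hdet⟩ := ih A' B' hspan'
      refine ⟨Matrix.of fun i' j => if h : j = Fin.last b then (if i' = i then 1 else 0)
          else R' i' (j.castPred h),
        fun i' j => by
          rcases eq_or_ne j (Fin.last b) with h | h
          · rcases eq_or_ne i' i with h2 | h2
            · right; simp [h, h2]
            · left; simp [h, h2]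
          · simpa [h] using hR' i' (j.castPred h), ?_⟩
      have hM : (A + (Matrix.of fun i' j => if h : j = Fin.last b then (if i' = i then (1:K) else 0)
          else R' i' (j.castPred h)) * B) = A' + R' * B' := by
        ext i' k
        rw [Matrix.add_apply, Matrix.add_apply, Matrix.mul_apply, Fin.sum_univ_castSucc]
        have hne : ∀ x : Fin b, x.castSucc ≠ Fin.last b := fun x => (Fin.castSucc_lt_last x).ne
        by_cases hii : i' = i
        · subst hii
          simp [hne, hB'def, hA'def, Matrix.mul_apply]
          ring
        · simp [hne, hB'def, hA'def, Matrix.mul_apply, hii, Matrix.updateRow_ne hii]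
      rw [hM]
      exact hdet


/-- if the stacked block matrix `[[A, C₁],[B, C₂]]` is `Z`-nonsingular
(`Z` a prime ideal), then there is a 0-1 matrix `R` with `A + RB` `Z`-nonsingular. -/
theorem stmt_8 {S : Type*} [CommRing S] (Z : Ideal S) [Z.IsPrime] {a b : ℕ}
    (A : Matrix (Fin a) (Fin a) S) (B : Matrix (Fin b) (Fin a) S)
    (C₁ : Matrix (Fin a) (Fin b) S) (C₂ : Matrix (Fin b) (Fin b) S)
    (h : (Matrix.fromBlocks A C₁ B C₂).det ∉ Z) :
    ∃ R : Matrix (Fin a) (Fin b) S,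
      (∀ i j, R i j = 0 ∨ R i j = 1) ∧ (A + R * B).det ∉ Z := by
  classical
  let K := FractionRing (S ⧸ Z)
  let φ : S →+* K := (algebraMap (S ⧸ Z) K).comp (Ideal.Quotient.mk Z)
  have hφ : ∀ s : S, φ s = 0 ↔ s ∈ Z := by
    intro s
    rw [RingHom.comp_apply, IsFractionRing.to_map_eq_zero_iff,
      Ideal.Quotient.eq_zero_iff_mem]
  have hdeq : ∀ {n : ℕ} (M : Matrix (Fin n) (Fin n) S), φ M.det = (M.map φ).det :=
    fun M => RingHom.map_det φ M
  have hdeq2 : φ (Matrix.fromBlocks A C₁ B C₂).det = ((Matrix.fromBlocks A C₁ B C₂).map φ).det :=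
    RingHom.map_det φ _
  have hdetK : ((Matrix.fromBlocks A C₁ B C₂).map φ).det ≠ 0 := by
    rw [← hdeq2]
    intro h0
    exact h ((hφ _).mp h0)
  have hU : IsUnit ((Matrix.fromBlocks A C₁ B C₂).map φ) :=
    (Matrix.isUnit_iff_isUnit_det _).mpr (isUnit_iff_ne_zero.mpr hdetK)
  have hsurj : Function.Surjective ((Matrix.fromBlocks A C₁ B C₂).map φ).vecMul :=
    Matrix.vecMul_surjective_iff_isUnit.mpr hU
  have hspan : Submodule.span K (Set.range (A.map φ) ∪ Set.range (B.map φ)) = ⊤ := by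
    rw [eq_top_iff]
    rintro v -
    obtain ⟨x, hx⟩ := hsurj (Sum.elim v 0)
    have hv : v = Matrix.vecMul (x ∘ Sum.inl) (A.map φ) + Matrix.vecMul (x ∘ Sum.inr) (B.map φ) := by
      funext k
      have h1 := congrFun hx (Sum.inl k)
      simp only [Matrix.vecMul, dotProduct, Fintype.sum_sum_type, Matrix.map_apply,
        Matrix.fromBlocks_apply₁₁, Matrix.fromBlocks_apply₂₁, Sum.elim_inl,
        Function.comp_apply, Pi.add_apply] at h1 ⊢
      exact h1.symm
    rw [hv]
    refine Submodule.add_mem _ ?_ ?_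
    · have hm : Matrix.vecMul (x ∘ Sum.inl) (A.map φ) ∈ LinearMap.range (A.map φ).vecMulLinear :=
        ⟨x ∘ Sum.inl, rfl⟩
      rw [range_vecMulLinear] at hm
      exact Submodule.span_mono Set.subset_union_left hm
    · have hm : Matrix.vecMul (x ∘ Sum.inr) (B.map φ) ∈ LinearMap.range (B.map φ).vecMulLinear :=
        ⟨x ∘ Sum.inr, rfl⟩
      rw [range_vecMulLinear] at hm
      exact Submodule.span_mono Set.subset_union_right hm
  obtain ⟨RK, hRK, hdetRK⟩ := key_lemma b (A.map φ) (B.map φ) hspan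
  refine ⟨Matrix.of fun i j => if RK i j = 1 then (1 : S) else 0, fun i j => by
    dsimp only [Matrix.of_apply]; split
    · exact Or.inr rfl
    · exact Or.inl rfl, ?_⟩
  set R : Matrix (Fin a) (Fin b) S := Matrix.of fun i j => if RK i j = 1 then (1 : S) else 0
    with hRdef
  have hmap : R.map φ = RK := by
    ext i j
    rw [Matrix.map_apply, hRdef, Matrix.of_apply]
    rcases hRK i j with h0 | h1
    · rw [if_neg (by rw [h0]; exact zero_ne_one), map_zero, h0]
    · rw [if_pos h1, _root_.map_one φ, h1]
  intro hmem
  apply hdetRK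
  have heq : φ ((A + R * B).det) = (A.map φ + RK * B.map φ).det := by
    rw [hdeq (A + R * B), Matrix.map_add _ (map_add φ), Matrix.map_mul (f := φ), hmap]
  rw [← heq, (hφ _).mpr hmem]
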